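/- arXiv:1905.11134 — 3 statements merged into one kernel-verified Lean document; each statement's English description precedes it below -/
import Mathlib

section
/- Let G be a graph, t a nontrivial term, and h : var(t) → V(G) a mapping. Then the following are equivalent: (i) the value h(t) computed in the graph algebra A(G) is not ∞; (ii) h(t) = h(L(t)); (iii) h is a graph homomorphism of the term graph G(t) into G. In particular, if the image of h induces a disconnected subgraph of G, then h is not a homomorphism and h(t) = ∞. -/
open Classical

/-- A graph `(V, E)`: an ambient type `U`, a set `verts ⊆ U` of vertices and an
edge relation `Edge ⊆ verts × verts`. -/
structure DGraph : Type 1 where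
  U : Type
  verts : Set U
  Edge : U → U → Prop
  edge_mem : ∀ a b, Edge a b → a ∈ verts ∧ b ∈ verts

namespace DGraph

/-- The induced subgraph of `G` on a set `S`. -/
def induce (G : DGraph) (S : Set G.U) : DGraph where
  U := G.U
  verts := G.verts ∩ S
  Edge a b := G.Edge a b ∧ a ∈ S ∧ b ∈ S
  edge_mem a b h := ⟨⟨(G.edge_mem a b h.1).1, h.2.1⟩, (G.edge_mem a b h.1).2, h.2.2⟩

/-- The set of vertices reachable from `a` by a directed walk (including `a` itself). -/
def reachSet (G : DGraph) (a : G.U) : Set G.U := {b | Relation.ReflTransGen G.Edge a b}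

/-- The subgraph of `G` induced by the set of vertices reachable from `a`. -/
def reachSub (G : DGraph) (a : G.U) : DGraph := G.induce (G.reachSet a)

/-- A graph is undirected if its edge relation is symmetric. -/
def Undirected (G : DGraph) : Prop := ∀ a b, G.Edge a b → G.Edge b a

end DGraph

/-- A homomorphism of graphs: maps vertices to vertices and edges to edges. -/
def IsHom (G H : DGraph) (f : G.U → H.U) : Prop :=
  (∀ a ∈ G.verts, f a ∈ H.verts) ∧ ∀ a b, G.Edge a b → H.Edge (f a) (f b)

/-- A strong homomorphism: additionally maps non-edges to non-edges. -/
def IsStrongHom (G H : DGraph) (f : G.U → H.U) : Prop :=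
  IsHom G H f ∧ ∀ a ∈ G.verts, ∀ b ∈ G.verts, ¬ G.Edge a b → ¬ H.Edge (f a) (f b)

/-- Isomorphism of graphs. -/
def IsIsomorphic (G H : DGraph) : Prop :=
  ∃ f : G.U → H.U, Set.BijOn f G.verts H.verts ∧
    ∀ a ∈ G.verts, ∀ b ∈ G.verts, (G.Edge a b ↔ H.Edge (f a) (f b))

/-- Terms of type (2,0) over a variable set `X`: variables, the constant `∞`,
and a binary operation (juxtaposition). -/
inductive GTerm (X : Type) : Type
  | var : X → GTerm X
  | inf : GTerm X
  | app : GTerm X → GTerm X → GTerm X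

namespace GTerm

/-- The set of variables occurring in a term. -/
def vars {X : Type} : GTerm X → Set X
  | var x => {x}
  | inf => ∅
  | app t₁ t₂ => t₁.vars ∪ t₂.vars

/-- A term is nontrivial if it contains no occurrence of `∞`. -/
def Nontrivial {X : Type} : GTerm X → Prop
  | var _ => True
  | inf => False
  | app t₁ t₂ => t₁.Nontrivial ∧ t₂.Nontrivial

/-- The leftmost variable of a term (`none` for the bare constant `∞` on the left). -/
def leftVar {X : Type} : GTerm X → Option X
  | var x => some x
  | inf => none
  | app t₁ _ => t₁.leftVar

/-- The edge set of the term graph `G(t)`. -/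
def edges {X : Type} : GTerm X → Set (X × X)
  | var _ => ∅
  | inf => ∅
  | app t₁ t₂ =>
      t₁.edges ∪ t₂.edges ∪
        {p | ∃ x y, t₁.leftVar = some x ∧ t₂.leftVar = some y ∧ p = (x, y)}

theorem vars_finite {X : Type} (t : GTerm X) : t.vars.Finite := by
  induction t with
  | var x => simpa [vars] using Set.finite_singleton x
  | inf => simpa [vars] using Set.finite_empty
  | app t₁ t₂ ih₁ ih₂ => simpa [vars] using ih₁.union ih₂

end GTerm

/-- The term graph `G(t)` of a term `t`: vertices are the variables of `t`. -/
def termGraph {X : Type} (t : GTerm X) : DGraph where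
  U := X
  verts := t.vars
  Edge a b := (a, b) ∈ t.edges ∧ a ∈ t.vars ∧ b ∈ t.vars
  edge_mem a b h := ⟨h.2.1, h.2.2⟩

/-- Evaluation of a term in the graph algebra `A(G)`; `none` plays the role of `∞`:
`x · y = x` if `(x,y)` is an edge, and `∞` otherwise. -/
noncomputable def DGraph.eval (G : DGraph) {X : Type} (h : X → Option G.U) :
    GTerm X → Option G.U
  | .var x => h x
  | .inf => none
  | .app t₁ t₂ =>
      match G.eval h t₁, G.eval h t₂ with
      | some a, some b => if G.Edge a b then some a else none
      | _, _ => none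

/-- Identities: pairs of terms. -/
abbrev GId (X : Type) := GTerm X × GTerm X

/-- An assignment takes values in `V(G) ∪ {∞}`. -/
def DGraph.Assign (G : DGraph) {X : Type} (h : X → Option G.U) : Prop :=
  ∀ x a, h x = some a → a ∈ G.verts

/-- The assignment `h` makes the identity `e` true in `A(G)`. -/
def DGraph.SatIdWith (G : DGraph) {X : Type} (h : X → Option G.U) (e : GId X) : Prop :=
  G.eval h e.1 = G.eval h e.2

/-- `G` satisfies the identity `e`. -/
def DGraph.SatId (G : DGraph) {X : Type} (e : GId X) : Prop :=
  ∀ h : X → Option G.U, G.Assign h → G.SatIdWith h e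

/-- An implication (quasi-identity) over the standard countably infinite
variable set `ℕ`: a finite set of identities (the premise) and an identity
(the consequence). -/
structure Imp : Type where
  prem : Set (GId ℕ)
  concl : GId ℕ
  prem_fin : prem.Finite

/-- `G` satisfies the implication `imp`. -/
def DGraph.SatImp (G : DGraph) (imp : Imp) : Prop :=
  ∀ h : ℕ → Option G.U, G.Assign h →
    (∀ e ∈ imp.prem, G.SatIdWith h e) → G.SatIdWith h imp.concl

/-- The implications satisfied by every member of a class `K` of graphs. -/
def qId (K : Set DGraph) : Set Imp := {imp | ∀ G ∈ K, G.SatImp imp}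

/-- The class of graphs satisfying every implication of `Sg`. -/
def ModI (Sg : Set Imp) : Set DGraph := {G | ∀ imp ∈ Sg, G.SatImp imp}

/-- The finite members of `ModI Sg`. -/
def ModIf (Sg : Set Imp) : Set DGraph := {G | G ∈ ModI Sg ∧ G.verts.Finite}

/-- The pointed graph `G^⊥`: a new vertex `⊥ = none` with edges from `⊥` to all
vertices, including a loop at `⊥`. -/
def DGraph.pointed (G : DGraph) : DGraph where
  U := Option G.U
  verts := insert none (some '' G.verts)
  Edge a b := b ∈ insert none (some '' G.verts) ∧
    (a = none ∨ ∃ u v, a = some u ∧ b = some v ∧ G.Edge u v)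
  edge_mem a b h := by
    refine ⟨?_, h.1⟩
    rcases h.2 with rfl | ⟨u, v, rfl, rfl, huv⟩
    · exact Set.mem_insert _ _
    · exact Set.mem_insert_of_mem _ ⟨u, (G.edge_mem u v huv).1, rfl⟩

/-- Direct product of a family of graphs (componentwise edges). -/
def gProd {I : Type} (G : I → DGraph) : DGraph where
  U := (i : I) → (G i).U
  verts := {a | ∀ i, a i ∈ (G i).verts}
  Edge a b := ∀ i, (G i).Edge (a i) (b i)
  edge_mem a b h :=
    ⟨fun i => ((G i).edge_mem _ _ (h i)).1, fun i => ((G i).edge_mem _ _ (h i)).2⟩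

/-- The pointed product `∏ i, (G i)^⊥` of a family of graphs. -/
def pointedProd {I : Type} (G : I → DGraph) : DGraph := gProd fun i => (G i).pointed

/-- `W` is a strong pointed subproduct of the family `G`:
(1) `W` is an induced subgraph of the pointed product;
(2) every vertex has nonempty support;
(3) for every vertex `a` and every `k` in the support of `a`, the projection `p k`
restricted to `reach_W(a)` is a strong homomorphism into `G k`. -/
def IsSPSofFam {I : Type} (G : I → DGraph) (W : DGraph) : Prop :=
  ∃ S : Set (pointedProd G).U,
    W = (pointedProd G).induce S ∧
    (∀ a ∈ ((pointedProd G).induce S).verts, ∃ i, a i ≠ none) ∧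
    (∀ a ∈ ((pointedProd G).induce S).verts, ∀ k : I, a k ≠ none →
      (∀ b ∈ (((pointedProd G).induce S).reachSub a).verts, b k ≠ none) ∧
      (∀ b ∈ (((pointedProd G).induce S).reachSub a).verts,
        ∀ u, b k = some u → u ∈ (G k).verts) ∧
      (∀ b ∈ (((pointedProd G).induce S).reachSub a).verts,
       ∀ c ∈ (((pointedProd G).induce S).reachSub a).verts,
        ∀ u v, b k = some u → c k = some v →
          ((((pointedProd G).induce S).reachSub a).Edge b c ↔ (G k).Edge u v)))

/-- The class of all strong pointed subproducts of families of members of `K`. -/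
def Psps (K : Set DGraph) : Set DGraph :=
  {W | ∃ (I : Type) (G : I → DGraph), (∀ i, G i ∈ K) ∧ IsSPSofFam G W}

/-- The finite members of `Psps K`. -/
def PspsFin (K : Set DGraph) : Set DGraph := {W | W ∈ Psps K ∧ W.verts.Finite}

/-- Isomorphic copies of members of a class of graphs. -/
def Icl (C : Set DGraph) : Set DGraph := {W | ∃ V ∈ C, IsIsomorphic V W}

/-- `W` is the union of a directed family of members of `C` (the members of the
family are induced subgraphs of a common member, pairwise). -/
def IsDirUnionOf (W : DGraph) (C : Set DGraph) : Prop :=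
  ∃ (ι : Type) (V : ι → Set W.U) (E : ι → W.U → W.U → Prop)
    (hmem : ∀ i, ∀ a b, E i a b → a ∈ V i ∧ b ∈ V i),
    (∀ i, DGraph.mk W.U (V i) (E i) (hmem i) ∈ C) ∧
    (∀ i j, ∃ k,
      (V i ⊆ V k ∧ ∀ a b, E i a b ↔ E k a b ∧ a ∈ V i ∧ b ∈ V i) ∧
      (V j ⊆ V k ∧ ∀ a b, E j a b ↔ E k a b ∧ a ∈ V j ∧ b ∈ V j)) ∧
    W.verts = ⋃ i, V i ∧
    ∀ a b, W.Edge a b ↔ ∃ i, E i a b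

/-- The class of all directed unions of members of `C`. -/
def DCl (C : Set DGraph) : Set DGraph := {W | IsDirUnionOf W C}

/-- Condition (a) of Proposition `IPK-ab`. -/
def CondA (K : Set DGraph) (W : DGraph) : Prop :=
  ∀ a ∈ W.verts, ∃ Ga ∈ K, ∃ φ : W.U → Ga.U, IsStrongHom (W.reachSub a) Ga φ

/-- Condition (b) of Proposition `IPK-ab`. -/
def CondB (K : Set DGraph) (W : DGraph) : Prop :=
  ∀ a ∈ W.verts, ∀ a' ∈ W.verts, a ≠ a' → W.reachSet a = W.reachSet a' →
    ∃ Gp ∈ K, ∃ φ : W.U → Gp.U, IsStrongHom (W.reachSub a) Gp φ ∧ φ a ≠ φ a'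

/-- The identities `x_a x_b ≈ x_a` for edges `(a,b)` of `G` (variables are the
vertices of `G`). -/
def GammaE (G : DGraph) : Set (GId G.U) :=
  {e | ∃ a b, G.Edge a b ∧ e = (GTerm.app (GTerm.var a) (GTerm.var b), GTerm.var a)}

/-- The identities `x_a x_b ≈ ∞` for non-edges `(a,b)` of `G`. -/
def GammaN (G : DGraph) : Set (GId G.U) :=
  {e | ∃ a b, a ∈ G.verts ∧ b ∈ G.verts ∧ ¬ G.Edge a b ∧
    e = (GTerm.app (GTerm.var a) (GTerm.var b), GTerm.inf)}

/-- `Σ(G) = Γ_e(G) ∪ Γ_n(G)`. -/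
def SigmaIds (G : DGraph) : Set (GId G.U) := GammaE G ∪ GammaN G

theorem SigmaIds_finite (G : DGraph) (hfin : G.verts.Finite) : (SigmaIds G).Finite := by
  classical
  have hsub : SigmaIds G ⊆
      (fun p : G.U × G.U =>
        if G.Edge p.1 p.2 then
          (GTerm.app (GTerm.var p.1) (GTerm.var p.2), GTerm.var p.1)
        else (GTerm.app (GTerm.var p.1) (GTerm.var p.2), GTerm.inf)) ''
        (G.verts ×ˢ G.verts) := by
    rintro e (⟨a, b, hab, rfl⟩ | ⟨a, b, ha, hb, hnab, rfl⟩)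
    · exact ⟨(a, b), Set.mk_mem_prod (G.edge_mem a b hab).1 (G.edge_mem a b hab).2,
        by simp [hab]⟩
    · exact ⟨(a, b), Set.mk_mem_prod ha hb, by simp [hnab]⟩
  exact ((hfin.prod hfin).image _).subset hsub

/-- The subgraph of `G` induced on `S` is (weakly) connected. -/
def DGraph.ConnectedOn (G : DGraph) (S : Set G.U) : Prop :=
  ∀ a ∈ (G.induce S).verts, ∀ b ∈ (G.induce S).verts,
    Relation.ReflTransGen (fun u v => (G.induce S).Edge u v ∨ (G.induce S).Edge v u) a b

lemma leftVar_mem_vars {X : Type} : ∀ (t : GTerm X) (x : X),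
    t.leftVar = some x → x ∈ t.vars := by
  intro t
  induction t with
  | var y => intro x hx; simp [GTerm.leftVar] at hx; simp [GTerm.vars, hx]
  | inf => intro x hx; simp [GTerm.leftVar] at hx
  | app t₁ t₂ ih₁ ih₂ =>
      intro x hx
      exact Or.inl (ih₁ x hx)

lemma leftVar_exists {X : Type} : ∀ (t : GTerm X), t.Nontrivial →
    ∃ x, t.leftVar = some x := by
  intro t
  induction t with
  | var y => intro _; exact ⟨y, rfl⟩
  | inf => intro hf; exact absurd hf (by simp [GTerm.Nontrivial])
  | app t₁ t₂ ih₁ ih₂ => intro hnt; exact ih₁ hnt.1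

lemma eval_eq_none_or {X : Type} (G : DGraph) (h : X → G.U) :
    ∀ (t : GTerm X) (x0 : X), t.leftVar = some x0 →
      G.eval (fun x => some (h x)) t = none ∨
      G.eval (fun x => some (h x)) t = some (h x0) := by
  intro t
  induction t with
  | var y => intro x0 hx0; simp [GTerm.leftVar] at hx0; subst hx0; simp [DGraph.eval]
  | inf => intro x0 hx0; simp [GTerm.leftVar] at hx0
  | app t₁ t₂ ih₁ ih₂ =>
      intro x0 hx0
      have hx0' : t₁.leftVar = some x0 := hx0
      rcases ih₁ x0 hx0' with h1 | h1
      · left; simp [DGraph.eval, h1]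
      · rcases h2 : G.eval (fun x => some (h x)) t₂ with _ | b
        · left; simp [DGraph.eval, h1, h2]
        · by_cases he : G.Edge (h x0) b
          · right; simp [DGraph.eval, h1, h2, he]
          · left; simp [DGraph.eval, h1, h2, he]

lemma eval_ne_none_edges {X : Type} (G : DGraph) (h : X → G.U) :
    ∀ (t : GTerm X), G.eval (fun x => some (h x)) t ≠ none →
      ∀ a b, (a, b) ∈ t.edges → G.Edge (h a) (h b) := by
  intro t
  induction t with
  | var y => intro _ a b hab; simp [GTerm.edges] at hab
  | inf => intro hne; simp [DGraph.eval] at hne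
  | app t₁ t₂ ih₁ ih₂ =>
      intro hne a b hab
      have h1 : G.eval (fun x => some (h x)) t₁ ≠ none := by
        intro hc; apply hne; simp [DGraph.eval, hc]
      have h2 : G.eval (fun x => some (h x)) t₂ ≠ none := by
        intro hc; apply hne
        rcases hv : G.eval (fun x => some (h x)) t₁ with _ | u
        · simp [DGraph.eval, hv]
        · simp [DGraph.eval, hv, hc]
      rcases hab with (hab | hab) | hab
      · exact ih₁ h1 a b hab
      · exact ih₂ h2 a b hab
      · obtain ⟨x, y, hx, hy, hxy⟩ := hab
        have hxy' : a = x ∧ b = y := by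
          have := congrArg Prod.fst hxy
          have := congrArg Prod.snd hxy
          exact ⟨by simpa using congrArg Prod.fst hxy, by simpa using congrArg Prod.snd hxy⟩
        obtain ⟨rfl, rfl⟩ := hxy'
        rcases eval_eq_none_or G h t₁ a hx with hv1 | hv1
        · exact absurd hv1 h1
        rcases eval_eq_none_or G h t₂ b hy with hv2 | hv2
        · exact absurd hv2 h2
        by_cases he : G.Edge (h a) (h b)
        · exact he
        · exact absurd (by simp [DGraph.eval, hv1, hv2, he]) hne

lemma edges_eval {X : Type} (G : DGraph) (h : X → G.U) :
    ∀ (t : GTerm X), t.Nontrivial →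
      (∀ a b, (a, b) ∈ t.edges → G.Edge (h a) (h b)) →
      ∀ x0, t.leftVar = some x0 →
        G.eval (fun x => some (h x)) t = some (h x0) := by
  intro t
  induction t with
  | var y => intro _ _ x0 hx0; simp [GTerm.leftVar] at hx0; subst hx0; simp [DGraph.eval]
  | inf => intro hf; exact absurd hf (by simp [GTerm.Nontrivial])
  | app t₁ t₂ ih₁ ih₂ =>
      intro hnt hE x0 hx0
      obtain ⟨x2, hx2⟩ := leftVar_exists t₂ hnt.2
      have h1 : G.eval (fun x => some (h x)) t₁ = some (h x0) :=
        ih₁ hnt.1 (fun a b hab => hE a b (Or.inl (Or.inl hab))) x0 hx0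
      have h2 : G.eval (fun x => some (h x)) t₂ = some (h x2) :=
        ih₂ hnt.2 (fun a b hab => hE a b (Or.inl (Or.inr hab))) x2 hx2
      have he : G.Edge (h x0) (h x2) :=
        hE x0 x2 (Or.inr ⟨x0, x2, hx0, hx2, rfl⟩)
      simp [DGraph.eval, h1, h2, he]

lemma termGraph_connected {X : Type} : ∀ (t : GTerm X), t.Nontrivial →
    ∀ x0, t.leftVar = some x0 → ∀ a ∈ t.vars,
      Relation.ReflTransGen
        (fun u v => (termGraph t).Edge u v ∨ (termGraph t).Edge v u) a x0 := by
  intro t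
  induction t with
  | var y =>
      intro _ x0 hx0 a ha
      simp [GTerm.leftVar] at hx0; simp [GTerm.vars] at ha
      subst hx0; subst ha; exact Relation.ReflTransGen.refl
  | inf => intro hf; exact absurd hf (by simp [GTerm.Nontrivial])
  | app t₁ t₂ ih₁ ih₂ =>
      intro hnt x0 hx0 a ha
      obtain ⟨x2, hx2⟩ := leftVar_exists t₂ hnt.2
      have lift1 : ∀ u v, ((termGraph t₁).Edge u v ∨ (termGraph t₁).Edge v u) →
          ((termGraph (t₁.app t₂)).Edge u v ∨ (termGraph (t₁.app t₂)).Edge v u) := by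
        rintro u v (⟨he, hu, hv⟩ | ⟨he, hu, hv⟩)
        · exact Or.inl ⟨Or.inl (Or.inl he), Or.inl hu, Or.inl hv⟩
        · exact Or.inr ⟨Or.inl (Or.inl he), Or.inl hu, Or.inl hv⟩
      have lift2 : ∀ u v, ((termGraph t₂).Edge u v ∨ (termGraph t₂).Edge v u) →
          ((termGraph (t₁.app t₂)).Edge u v ∨ (termGraph (t₁.app t₂)).Edge v u) := by
        rintro u v (⟨he, hu, hv⟩ | ⟨he, hu, hv⟩)
        · exact Or.inl ⟨Or.inl (Or.inr he), Or.inr hu, Or.inr hv⟩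
        · exact Or.inr ⟨Or.inl (Or.inr he), Or.inr hu, Or.inr hv⟩
      rcases ha with ha | ha
      · exact Relation.ReflTransGen.mono (fun u v => lift1 u v) _ _ (ih₁ hnt.1 x0 hx0 a ha)
      · have step : (termGraph (t₁.app t₂)).Edge x0 x2 := by
          refine ⟨Or.inr ⟨x0, x2, hx0, hx2, rfl⟩, Or.inl (leftVar_mem_vars t₁ x0 hx0),
            Or.inr (leftVar_mem_vars t₂ x2 hx2)⟩
        have h1 : Relation.ReflTransGen
            (fun u v => (termGraph (t₁.app t₂)).Edge u v ∨ (termGraph (t₁.app t₂)).Edge v u)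
            a x2 := Relation.ReflTransGen.mono (fun u v => lift2 u v) _ _ (ih₂ hnt.2 x2 hx2 a ha)
        exact h1.tail (Or.inr step)

lemma edges_mem_vars {X : Type} : ∀ (t : GTerm X) (a b : X),
    (a, b) ∈ t.edges → a ∈ t.vars ∧ b ∈ t.vars := by
  intro t
  induction t with
  | var y => intro a b hab; simp [GTerm.edges] at hab
  | inf => intro a b hab; simp [GTerm.edges] at hab
  | app t₁ t₂ ih₁ ih₂ =>
      rintro a b ((hab | hab) | ⟨x, y, hx, hy, hxy⟩)
      · exact ⟨Or.inl (ih₁ a b hab).1, Or.inl (ih₁ a b hab).2⟩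
      · exact ⟨Or.inr (ih₂ a b hab).1, Or.inr (ih₂ a b hab).2⟩
      · obtain ⟨rfl, rfl⟩ : a = x ∧ b = y :=
          ⟨by simpa using congrArg Prod.fst hxy, by simpa using congrArg Prod.snd hxy⟩
        exact ⟨Or.inl (leftVar_mem_vars t₁ a hx), Or.inr (leftVar_mem_vars t₂ b hy)⟩

lemma rtg_symm {α : Type*} {r : α → α → Prop} (hs : Symmetric r) {a b : α}
    (hab : Relation.ReflTransGen r a b) : Relation.ReflTransGen r b a := by
  induction hab with
  | refl => exact Relation.ReflTransGen.refl
  | tail _ hbc ih => exact Relation.ReflTransGen.head (hs hbc) ih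

/-- for a nontrivial term `t` and a mapping `h : var(t) → V(G)`,
the following are equivalent: (i) `h(t) ≠ ∞`; (ii) `h(t) = h(L(t))`;
(iii) `h` is a homomorphism of `G(t)` into `G`. In particular, if the image of
`h` is not connected, then `h` is not a homomorphism and `h(t) = ∞`. -/
theorem statement_0 (G : DGraph) (X : Type) (t : GTerm X) (ht : t.Nontrivial)
    (h : X → G.U) (hmap : ∀ x ∈ t.vars, h x ∈ G.verts)
    (x0 : X) (hx0 : t.leftVar = some x0) :
    ((G.eval (fun x => some (h x)) t ≠ none ↔
        G.eval (fun x => some (h x)) t = some (h x0)) ∧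
     (G.eval (fun x => some (h x)) t = some (h x0) ↔ IsHom (termGraph t) G h)) ∧
    (¬ G.ConnectedOn (h '' t.vars) →
      ¬ IsHom (termGraph t) G h ∧ G.eval (fun x => some (h x)) t = none) := by
  have hA : G.eval (fun x => some (h x)) t ≠ none ↔
      G.eval (fun x => some (h x)) t = some (h x0) := by
    constructor
    · intro hne
      rcases eval_eq_none_or G h t x0 hx0 with hv | hv
      · exact absurd hv hne
      · exact hv
    · intro hv; simp [hv]
  have hB : G.eval (fun x => some (h x)) t = some (h x0) ↔ IsHom (termGraph t) G h := by
    constructor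
    · intro hv
      refine ⟨hmap, ?_⟩
      rintro a b ⟨hab, _, _⟩
      exact eval_ne_none_edges G h t (by simp [hv]) a b hab
    · intro ⟨_, hhom⟩
      exact edges_eval G h t ht (fun a b hab =>
        hhom a b ⟨hab, (edges_mem_vars t a b hab).1, (edges_mem_vars t a b hab).2⟩)
        x0 hx0
  refine ⟨⟨hA, hB⟩, ?_⟩
  intro hnc
  have hcon : IsHom (termGraph t) G h → G.ConnectedOn (h '' t.vars) := by
    intro ⟨_, hhom⟩
    rintro c ⟨hcV, a, ha, rfl⟩ d ⟨hdV, b, hb, rfl⟩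
    have hsym : Symmetric (fun u v => (termGraph t).Edge u v ∨ (termGraph t).Edge v u) :=
      fun u v huv => huv.symm
    have hax0 := termGraph_connected t ht x0 hx0 a ha
    have hbx0 := termGraph_connected t ht x0 hx0 b hb
    have hab : Relation.ReflTransGen
        (fun u v => (termGraph t).Edge u v ∨ (termGraph t).Edge v u) a b :=
      hax0.trans (rtg_symm hsym hbx0)
    refine hab.lift (f := h) ?_
    rintro u v (⟨he, hu, hv⟩ | ⟨he, hu, hv⟩)
    · exact Or.inl ⟨hhom u v ⟨he, hu, hv⟩, ⟨u, hu, rfl⟩, ⟨v, hv, rfl⟩⟩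
    · exact Or.inr ⟨hhom v u ⟨he, hu, hv⟩, ⟨v, hu, rfl⟩, ⟨u, hv, rfl⟩⟩
  have hnh : ¬ IsHom (termGraph t) G h := fun hh => hnc (hcon hh)
  refine ⟨hnh, ?_⟩
  by_contra hne
  exact hnh (hB.mp (hA.mp hne))
end

section
/- Let K be a class of graphs and let W be a finite graph. Then W satisfies every quasi-identity that is satisfied by all members of K (i.e., W ∈ Modf qId K) if and only if the following two conditions hold: (a) for every a ∈ V(W) there exist a graph G_a ∈ K and a strong homomorphism φ_a : reach_W(a) → G_a; (b) for all a, a' ∈ V(W) with a ≠ a' and reach_W(a) = reach_W(a'), there exist a graph G_{a,a'} ∈ K and a strong homomorphism φ : reach_W(a) → G_{a,a'} with φ(a) ≠ φ(a'). -/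
open Classical

/-! ### Auxiliary machinery for statement 7 -/

namespace GTerm

/-- Map of variables applied to a term. -/
def tmap {X Y : Type} (f : X → Y) : GTerm X → GTerm Y
  | var x => var (f x)
  | inf => inf
  | app t₁ t₂ => app (tmap f t₁) (tmap f t₂)

end GTerm

lemma eval_tmap (G : DGraph) {X Y : Type} (f : X → Y) (h : Y → Option G.U)
    (t : GTerm X) : G.eval h (t.tmap f) = G.eval (h ∘ f) t := by
  induction t with
  | var x => rfl
  | inf => rfl
  | app t₁ t₂ ih₁ ih₂ => simp only [GTerm.tmap, DGraph.eval, ih₁, ih₂]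

lemma eval_mem_verts (G : DGraph) {X : Type} (h : X → Option G.U)
    (hA : G.Assign h) (t : GTerm X) (u : G.U) (he : G.eval h t = some u) :
    u ∈ G.verts := by
  induction t with
  | var x => exact hA x u he
  | inf => simp [DGraph.eval] at he
  | app t₁ t₂ ih₁ ih₂ =>
    rw [DGraph.eval] at he
    cases h1 : G.eval h t₁ with
    | none => rw [h1] at he; simp at he
    | some p =>
      cases h2 : G.eval h t₂ with
      | none => rw [h1, h2] at he; simp at he
      | some q =>
        rw [h1, h2] at he
        by_cases hE : G.Edge p q
        · simp only [if_pos hE, Option.some_inj] at he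
          exact ih₁ (he ▸ h1)
        · simp [hE] at he

/-- Push an assignment value along a partial strong homomorphism defined on
`reach_W(a)`. -/
noncomputable def pushMap (W G : DGraph) (a : W.U) (φ : W.U → G.U)
    (o : Option W.U) : Option G.U :=
  o.bind (fun u => if u ∈ W.reachSet a then some (φ u) else none)

lemma eval_push (W G : DGraph) (a : W.U) (φ : W.U → G.U)
    (hφ : IsStrongHom (W.reachSub a) G φ)
    {X : Type} (h : X → Option W.U) (hA : W.Assign h) (t : GTerm X) :
    G.eval (pushMap W G a φ ∘ h) t = pushMap W G a φ (W.eval h t) := by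
  induction t with
  | var x => rfl
  | inf => rfl
  | app t₁ t₂ ih₁ ih₂ =>
    rw [DGraph.eval, DGraph.eval, ih₁, ih₂]
    cases h1 : W.eval h t₁ with
    | none => simp [pushMap]
    | some u =>
      cases h2 : W.eval h t₂ with
      | none => simp [pushMap]
      | some v =>
        have huV : u ∈ W.verts := eval_mem_verts W h hA t₁ u h1
        have hvV : v ∈ W.verts := eval_mem_verts W h hA t₂ v h2
        by_cases hu : u ∈ W.reachSet a
        · by_cases hE : W.Edge u v
          · have hv : v ∈ W.reachSet a := hu.tail hE
            have hGE : G.Edge (φ u) (φ v) := hφ.1.2 u v ⟨hE, hu, hv⟩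
            simp [pushMap, hu, hv, hE, hGE]
          · by_cases hv : v ∈ W.reachSet a
            · have hnE : ¬ G.Edge (φ u) (φ v) :=
                hφ.2 u ⟨huV, hu⟩ v ⟨hvV, hv⟩ (fun hE' => hE hE'.1)
              simp [pushMap, hu, hv, hE, hnE]
            · simp [pushMap, hu, hv, hE]
        · by_cases hE : W.Edge u v <;> simp [pushMap, hu, hE]

lemma push_assign (W G : DGraph) (a : W.U) (φ : W.U → G.U)
    (hφ : IsStrongHom (W.reachSub a) G φ)
    {X : Type} (h : X → Option W.U) (hA : W.Assign h) :
    G.Assign (pushMap W G a φ ∘ h) := by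
  intro x p hp
  simp only [Function.comp, pushMap] at hp
  cases hx : h x with
  | none => rw [hx] at hp; simp at hp
  | some u =>
    rw [hx] at hp
    by_cases hu : u ∈ W.reachSet a
    · simp [hu] at hp
      have := hφ.1.1 u ⟨hA x u hx, hu⟩
      rwa [hp] at this
    · simp [hu] at hp

lemma edge_some (G : DGraph) {X : Type} (g : X → Option G.U) (b c : X)
    (hsat : G.eval g (.app (.var b) (.var c)) = G.eval g (.var b))
    (p : G.U) (hb : g b = some p) : ∃ q, g c = some q ∧ G.Edge p q := by
  simp only [DGraph.eval, hb] at hsat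
  cases hc : g c with
  | none => rw [hc] at hsat; simp at hsat
  | some q =>
    rw [hc] at hsat
    by_cases hE : G.Edge p q
    · exact ⟨q, rfl, hE⟩
    · simp [hE] at hsat

lemma nonedge_none (G : DGraph) {X : Type} (g : X → Option G.U) (b c : X)
    (hsat : G.eval g (.app (.var b) (.var c)) = none)
    (p q : G.U) (hb : g b = some p) (hc : g c = some q) : ¬ G.Edge p q := by
  simp only [DGraph.eval, hb, hc] at hsat
  intro hE
  simp [hE] at hsat

lemma prop_reach (W G : DGraph) (a : W.U) (g : W.U → Option G.U)
    (hsat : ∀ e ∈ SigmaIds (W.reachSub a), G.SatIdWith g e)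
    {u v : W.U} (hu : u ∈ W.reachSet a) (huv : Relation.ReflTransGen W.Edge u v)
    (hgu : g u ≠ none) : g v ≠ none := by
  induction huv with
  | refl => exact hgu
  | @tail b c hb hbc ih =>
    obtain ⟨p, hp⟩ := Option.ne_none_iff_exists'.mp ih
    have hbr : b ∈ W.reachSet a := Relation.ReflTransGen.trans hu hb
    have hcr : c ∈ W.reachSet a := hbr.tail hbc
    have hedge : (W.reachSub a).Edge b c := ⟨hbc, hbr, hcr⟩
    have hid : G.SatIdWith g
        (GTerm.app (GTerm.var b) (GTerm.var c), GTerm.var b) :=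
      hsat _ (Or.inl ⟨b, c, hedge, rfl⟩)
    obtain ⟨q, hq, _⟩ := edge_some G g b c hid p hp
    simp [hq]

/-- Extracting a strong homomorphism on `reach_W(a)` from an assignment that
satisfies `Σ(reach_W(a))` and is defined at `a`. -/
lemma extract_hom (W G : DGraph) (a : W.U) (g : W.U → Option G.U)
    (hAg : G.Assign g)
    (hsat : ∀ e ∈ SigmaIds (W.reachSub a), G.SatIdWith g e)
    (hga : g a ≠ none) :
    ∃ φ : W.U → G.U, IsStrongHom (W.reachSub a) G φ ∧
      ∀ u ∈ W.reachSet a, g u = some (φ u) := by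
  have prop : ∀ u, u ∈ W.reachSet a → g u ≠ none := fun u hu =>
    prop_reach W G a g hsat Relation.ReflTransGen.refl hu hga
  obtain ⟨p₀, hp₀⟩ := Option.ne_none_iff_exists'.mp hga
  refine ⟨fun u => (g u).getD p₀, ⟨⟨?_, ?_⟩, ?_⟩, ?_⟩
  · intro u hu
    obtain ⟨p, hp⟩ := Option.ne_none_iff_exists'.mp (prop u hu.2)
    simp only [hp, Option.getD_some]
    exact hAg u p hp
  · intro b c hbc
    obtain ⟨hE, hbr, hcr⟩ := hbc
    obtain ⟨p, hp⟩ := Option.ne_none_iff_exists'.mp (prop b hbr)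
    have hid : G.SatIdWith g
        (GTerm.app (GTerm.var b) (GTerm.var c), GTerm.var b) :=
      hsat _ (Or.inl ⟨b, c, ⟨hE, hbr, hcr⟩, rfl⟩)
    obtain ⟨q, hq, hGE⟩ := edge_some G g b c hid p hp
    simp only [hp, hq, Option.getD_some]
    exact hGE
  · intro b hb c hc hbc
    obtain ⟨p, hp⟩ := Option.ne_none_iff_exists'.mp (prop b hb.2)
    obtain ⟨q, hq⟩ := Option.ne_none_iff_exists'.mp (prop c hc.2)
    have hid : G.SatIdWith g
        (GTerm.app (GTerm.var b) (GTerm.var c), GTerm.inf) :=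
      hsat _ (Or.inr ⟨b, c, hb, hc, hbc, rfl⟩)
    have hn : G.eval g (GTerm.app (GTerm.var b) (GTerm.var c)) = none := hid
    simp only [hp, hq, Option.getD_some]
    exact nonedge_none G g b c hn p q hp hq
  · intro u hu
    obtain ⟨p, hp⟩ := Option.ne_none_iff_exists'.mp (prop u hu)
    simp [hp]

/-- a finite graph `W` belongs to `Modf qId K` iff conditions (a)
and (b) hold. -/
theorem statement_7 (K : Set DGraph) (W : DGraph) (hfin : W.verts.Finite) :
    W ∈ ModI (qId K) ↔ (CondA K W ∧ CondB K W) := by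
  constructor
  · intro hW
    -- set up an encoding of the vertices of `W` by natural numbers
    obtain ⟨f, hf⟩ := Set.countable_iff_exists_injective.mp hfin.countable
    set enc : W.U → ℕ := fun u => if h : u ∈ W.verts then f ⟨u, h⟩ else 0 with henc
    have encInj : ∀ u ∈ W.verts, ∀ v ∈ W.verts, enc u = enc v → u = v := by
      intro u hu v hv huv
      simp only [henc, dif_pos hu, dif_pos hv] at huv
      exact Subtype.ext_iff.mp (hf huv)
    set dec : ℕ → Option W.U :=
      fun n => if h : ∃ u, u ∈ W.verts ∧ enc u = n then some h.choose else none
      with hdecdef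
    have hdec : ∀ u ∈ W.verts, dec (enc u) = some u := by
      intro u hu
      have hex : ∃ v, v ∈ W.verts ∧ enc v = enc u := ⟨u, hu, rfl⟩
      simp only [hdecdef, dif_pos hex]
      exact congrArg some (encInj _ hex.choose_spec.1 u hu hex.choose_spec.2)
    have hdecAssign : W.Assign dec := by
      intro n u hnu
      simp only [hdecdef] at hnu
      split at hnu
      · next hex => rw [Option.some_inj] at hnu; exact hnu ▸ hex.choose_spec.1
      · exact absurd hnu (by simp)
    -- key step: for each `a` and each conclusion refuted in `W` under `dec`,
    -- obtain a counterexample assignment in some member of `K`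
    have key : ∀ a, ∀ concl : GId ℕ,
        ¬ W.SatIdWith dec concl →
        ∃ G ∈ K, ∃ g : W.U → Option G.U, G.Assign g ∧
          (∀ e ∈ SigmaIds (W.reachSub a), G.SatIdWith g e) ∧
          ∃ h₁ : ℕ → Option G.U, g = h₁ ∘ enc ∧ ¬ G.SatIdWith h₁ concl := by
      intro a concl hconcl
      set prem : Set (GId ℕ) :=
        (fun e : GId W.U => (e.1.tmap enc, e.2.tmap enc)) '' SigmaIds (W.reachSub a)
        with hpremdef
      have hsubfin : (W.reachSub a).verts.Finite :=
        hfin.subset (fun x hx => hx.1)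
      have hpremfin : prem.Finite := (SigmaIds_finite _ hsubfin).image _
      set imp : Imp := ⟨prem, concl, hpremfin⟩ with himpdef
      have hWfails : ¬ W.SatImp imp := by
        intro hsat
        apply hconcl
        apply hsat dec hdecAssign
        rintro e ⟨e₀, he₀, rfl⟩
        have key0 : ∀ u ∈ W.verts, (dec ∘ enc) u = some u := fun u hu => hdec u hu
        rcases he₀ with ⟨u, v, huv, rfl⟩ | ⟨u, v, hu, hv, hnuv, rfl⟩
        · -- edge identity
          obtain ⟨hE, hur, hvr⟩ := huv
          have huV : u ∈ W.verts := (W.edge_mem u v hE).1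
          have hvV : v ∈ W.verts := (W.edge_mem u v hE).2
          show W.eval dec (GTerm.tmap enc _) = W.eval dec (GTerm.tmap enc _)
          rw [eval_tmap, eval_tmap]
          show W.eval (X := W.U) (dec ∘ enc) (GTerm.app (GTerm.var u) (GTerm.var v)) = (dec ∘ enc) u
          rw [DGraph.eval.eq_3]
          rw [show W.eval (dec ∘ enc) (GTerm.var u) = (dec ∘ enc) u from rfl,
            show W.eval (dec ∘ enc) (GTerm.var v) = (dec ∘ enc) v from rfl,
            key0 u huV, key0 v hvV]
          simp [hE]
        · -- non-edge identity
          have hnE : ¬ W.Edge u v := fun hE => hnuv ⟨hE, hu.2, hv.2⟩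
          show W.eval dec (GTerm.tmap enc _) = W.eval dec (GTerm.tmap enc _)
          rw [eval_tmap, eval_tmap]
          show W.eval (X := W.U) (dec ∘ enc) (GTerm.app (GTerm.var u) (GTerm.var v)) = none
          rw [DGraph.eval.eq_3]
          rw [show W.eval (dec ∘ enc) (GTerm.var u) = (dec ∘ enc) u from rfl,
            show W.eval (dec ∘ enc) (GTerm.var v) = (dec ∘ enc) v from rfl,
            key0 u hu.1, key0 v hv.1]
          simp [hnE]
      have himpnot : imp ∉ qId K := fun h => hWfails (hW imp h)
      simp only [qId, Set.mem_setOf_eq] at himpnot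
      push_neg at himpnot
      obtain ⟨G, hGK, hGfail⟩ := himpnot
      rw [DGraph.SatImp] at hGfail
      push_neg at hGfail
      obtain ⟨h₁, hA₁, hprem₁, hconcl₁⟩ := hGfail
      refine ⟨G, hGK, h₁ ∘ enc, ?_, ?_, h₁, rfl, hconcl₁⟩
      · intro u p hp; exact hA₁ (enc u) p hp
      · intro e he
        have := hprem₁ (e.1.tmap enc, e.2.tmap enc) ⟨e, he, rfl⟩
        have h1 : G.eval h₁ (e.1.tmap enc) = G.eval h₁ (e.2.tmap enc) := this
        have h1 := (eval_tmap G enc h₁ e.1).symm.trans (h1.trans (eval_tmap G enc h₁ e.2))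
        exact h1
    constructor
    · -- Condition (a)
      intro a ha
      have hne : ¬ W.SatIdWith dec (GTerm.var (enc a), GTerm.inf) := by
        intro h
        have : dec (enc a) = none := h
        rw [hdec a ha] at this
        exact Option.some_ne_none a this
      obtain ⟨G, hGK, g, hAg, hsatSig, h₁, hg, hconcl₁⟩ := key a _ hne
      have hga : g a ≠ none := by
        intro h0
        apply hconcl₁
        show h₁ (enc a) = none
        rw [← Function.comp_apply (f := h₁) (g := enc), ← hg]; exact h0
      obtain ⟨φ, hφ, _⟩ := extract_hom W G a g hAg hsatSig hga
      exact ⟨G, hGK, φ, hφ⟩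
    · -- Condition (b)
      intro a ha a' ha' hne hreach
      have hsame : W.reachSub a' = W.reachSub a := by
        unfold DGraph.reachSub; rw [hreach]
      have ha'r : a' ∈ W.reachSet a := hreach ▸ Relation.ReflTransGen.refl
      have har : a ∈ W.reachSet a' := hreach.symm ▸ Relation.ReflTransGen.refl
      have hnc : ¬ W.SatIdWith dec (GTerm.var (enc a), GTerm.var (enc a')) := by
        intro h
        have h' : dec (enc a) = dec (enc a') := h
        rw [hdec a ha, hdec a' ha'] at h'
        exact hne (Option.some_inj.mp h')
      obtain ⟨G, hGK, g, hAg, hsatSig, h₁, hg, hconcl₁⟩ := key a _ hnc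
      have hgne : g a ≠ g a' := by
        intro h0
        apply hconcl₁
        show h₁ (enc a) = h₁ (enc a')
        rw [← Function.comp_apply (f := h₁) (g := enc),
          ← Function.comp_apply (f := h₁) (g := enc), ← hg]
        exact h0
      have hga : g a ≠ none := by
        intro h0
        have hga' : g a' ≠ none := fun h1 => hgne (h0.trans h1.symm)
        exact prop_reach W G a g hsatSig ha'r har hga' h0
      obtain ⟨φ, hφ, hval⟩ := extract_hom W G a g hAg hsatSig hga
      refine ⟨G, hGK, φ, hφ, ?_⟩
      intro heq
      apply hgne
      rw [hval a Relation.ReflTransGen.refl, hval a' ha'r, heq]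
  · -- converse direction
    rintro ⟨hCA, hCB⟩ imp himp h hA hprem
    by_contra hneq
    -- helper: transfer along a strong homomorphism on reach_W(a)
    have useφ : ∀ (G : DGraph), G ∈ K → ∀ (a : W.U) (φ : W.U → G.U),
        IsStrongHom (W.reachSub a) G φ →
        pushMap W G a φ (W.eval h imp.concl.1)
          = pushMap W G a φ (W.eval h imp.concl.2) := by
      intro G hGK a φ hφ
      have hA' : G.Assign (pushMap W G a φ ∘ h) := push_assign W G a φ hφ h hA
      have hsat := himp G hGK (pushMap W G a φ ∘ h) hA' ?_
      · rw [DGraph.SatIdWith, eval_push W G a φ hφ h hA, eval_push W G a φ hφ h hA]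
          at hsat
        exact hsat
      · intro e he
        rw [DGraph.SatIdWith, eval_push W G a φ hφ h hA, eval_push W G a φ hφ h hA,
          hprem e he]
    cases hs : W.eval h imp.concl.1 with
    | none =>
      cases ht : W.eval h imp.concl.2 with
      | none => exact hneq (hs.trans ht.symm)
      | some b =>
        have hbV : b ∈ W.verts := eval_mem_verts W h hA _ b ht
        obtain ⟨G, hGK, φ, hφ⟩ := hCA b hbV
        have := useφ G hGK b φ hφ
        rw [hs, ht] at this
        have hbb : b ∈ W.reachSet b := Relation.ReflTransGen.refl
        simp only [pushMap, Option.bind_none, Option.bind_some, if_pos hbb] at this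
        exact absurd this (by simp)
    | some a =>
      have haV : a ∈ W.verts := eval_mem_verts W h hA _ a hs
      cases ht : W.eval h imp.concl.2 with
      | none =>
        obtain ⟨G, hGK, φ, hφ⟩ := hCA a haV
        have := useφ G hGK a φ hφ
        rw [hs, ht] at this
        have haa : a ∈ W.reachSet a := Relation.ReflTransGen.refl
        simp only [pushMap, Option.bind_none, Option.bind_some, if_pos haa] at this
        exact absurd this (by simp)
      | some b =>
        have hbV : b ∈ W.verts := eval_mem_verts W h hA _ b ht
        have hab : a ≠ b := by
          intro hEq
          exact hneq (show W.eval h imp.concl.1 = W.eval h imp.concl.2 by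
            rw [hs, ht, hEq])
        by_cases hba : b ∈ W.reachSet a
        · by_cases hab' : a ∈ W.reachSet b
          · have hreq : W.reachSet a = W.reachSet b := by
              ext c
              constructor
              · intro hc; exact Relation.ReflTransGen.trans hab' hc
              · intro hc; exact Relation.ReflTransGen.trans hba hc
            obtain ⟨G, hGK, φ, hφ, hφne⟩ := hCB a haV b hbV hab hreq
            have := useφ G hGK a φ hφ
            rw [hs, ht] at this
            have haa : a ∈ W.reachSet a := Relation.ReflTransGen.refl
            simp only [pushMap, Option.bind_some, if_pos haa, if_pos hba] at this
            exact hφne (Option.some_inj.mp this)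
          · obtain ⟨G, hGK, φ, hφ⟩ := hCA b hbV
            have := useφ G hGK b φ hφ
            rw [hs, ht] at this
            have hbb : b ∈ W.reachSet b := Relation.ReflTransGen.refl
            simp only [pushMap, Option.bind_some, if_neg hab', if_pos hbb] at this
            exact absurd this (by simp)
        · obtain ⟨G, hGK, φ, hφ⟩ := hCA a haV
          have := useφ G hGK a φ hφ
          rw [hs, ht] at this
          have haa : a ∈ W.reachSet a := Relation.ReflTransGen.refl
          simp only [pushMap, Option.bind_some, if_pos haa, if_neg hba] at this
          exact absurd this (by simp)
end

section
/- Let t be a nontrivial term and let K be the class of all graphs H such that there exists no strong homomorphism of the term graph G(t) into H. Then K is a graph quasivariety; moreover, K = Mod {α → β}, where α = Σ(G(t)) (writing a variable x_a for each vertex a of G(t)) and β is the identity x_{L(t)} ≈ ∞. -/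
open Classical

namespace GTerm

theorem leftVar_isSome' {X : Type} (t : GTerm X) (ht : t.Nontrivial) :
    ∃ x, t.leftVar = some x := by
  induction t with
  | var x => exact ⟨x, rfl⟩
  | inf => exact absurd ht id
  | app t₁ t₂ ih₁ ih₂ => exact ih₁ ht.1

theorem leftVar_mem_vars' {X : Type} (t : GTerm X) {x : X} (h : t.leftVar = some x) :
    x ∈ t.vars := by
  induction t with
  | var y =>
    simp only [leftVar, Option.some.injEq] at h
    simp [vars, h]
  | inf => simp [leftVar] at h
  | app t₁ t₂ ih₁ ih₂ =>
    have := ih₁ h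
    simp only [vars, Set.mem_union]
    exact Or.inl this

theorem edges_mem' {X : Type} (t : GTerm X) {a b : X} (h : (a, b) ∈ t.edges) :
    a ∈ t.vars ∧ b ∈ t.vars := by
  induction t with
  | var x => simp [edges] at h
  | inf => simp [edges] at h
  | app t₁ t₂ ih₁ ih₂ =>
    rcases h with (h | h) | h
    · exact ⟨Or.inl (ih₁ h).1, Or.inl (ih₁ h).2⟩
    · exact ⟨Or.inr (ih₂ h).1, Or.inr (ih₂ h).2⟩
    · obtain ⟨x, y, hx, hy, hp⟩ := h
      obtain ⟨rfl, rfl⟩ := Prod.mk.injEq .. ▸ hp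
      exact ⟨Or.inl (leftVar_mem_vars' t₁ hx), Or.inr (leftVar_mem_vars' t₂ hy)⟩

theorem reach' {X : Type} (E : X → X → Prop) : ∀ (t : GTerm X), t.Nontrivial →
    (∀ a b, (a, b) ∈ t.edges → E a b) → ∀ x0 : X, t.leftVar = some x0 →
    ∀ a ∈ t.vars, Relation.ReflTransGen E x0 a := by
  intro t
  induction t with
  | var x =>
    intro ht hE x0 hx0 a ha
    simp only [vars, Set.mem_singleton_iff] at ha
    simp only [leftVar, Option.some.injEq] at hx0
    subst ha; subst hx0
    exact Relation.ReflTransGen.refl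
  | inf => intro ht; exact absurd ht id
  | app t₁ t₂ ih₁ ih₂ =>
    intro ht hE x0 hx0 a ha
    rcases ha with ha | ha
    · exact ih₁ ht.1 (fun a b h => hE a b (Or.inl (Or.inl h))) x0 hx0 a ha
    · obtain ⟨y, hy⟩ := leftVar_isSome' t₂ ht.2
      have hstep : E x0 y := hE _ _ (Or.inr ⟨x0, y, hx0, hy, rfl⟩)
      exact Relation.ReflTransGen.head hstep
        (ih₂ ht.2 (fun a b h => hE a b (Or.inl (Or.inr h))) y hy a ha)

end GTerm

/-- for a nontrivial term `t`, the class of all graphs admitting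
no strong homomorphism from the term graph `G(t)` is a graph quasivariety,
defined by the single implication `Σ(G(t)) → L(t) ≈ ∞`. -/
theorem statement_17 (t : GTerm ℕ) (ht : t.Nontrivial)
    (x0 : ℕ) (hx0 : t.leftVar = some x0) :
    {H : DGraph | ¬ ∃ f : ℕ → H.U, IsStrongHom (termGraph t) H f} =
      ModI (qId {H : DGraph | ¬ ∃ f : ℕ → H.U, IsStrongHom (termGraph t) H f}) ∧
    {H : DGraph | ¬ ∃ f : ℕ → H.U, IsStrongHom (termGraph t) H f} =
      ModI {Imp.mk (SigmaIds (termGraph t)) (GTerm.var x0, GTerm.inf)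
        (SigmaIds_finite (termGraph t) (GTerm.vars_finite t))} := by
  classical
  set K : Set DGraph := {H : DGraph | ¬ ∃ f : ℕ → H.U, IsStrongHom (termGraph t) H f} with hK
  set imp : Imp := Imp.mk (SigmaIds (termGraph t)) (GTerm.var x0, GTerm.inf)
    (SigmaIds_finite (termGraph t) (GTerm.vars_finite t)) with himp
  have key : K = ModI {imp} := by
    ext H
    constructor
    · -- K ⊆ ModI {imp}
      intro hH imp' himp'
      rcases himp' with rfl
      intro h hassign hprem
      show DGraph.eval H h (GTerm.var x0) = DGraph.eval H h GTerm.inf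
      show h x0 = none
      by_contra hne
      obtain ⟨u0, hu0⟩ : ∃ u, h x0 = some u := by
        cases hhx : h x0 with
        | none => exact absurd hhx hne
        | some u => exact ⟨u, rfl⟩
      -- propagation along edges
      have hstep : ∀ a b : ℕ, (termGraph t).Edge a b →
          (∃ u, h a = some u) → ∃ v u, h b = some v ∧ h a = some u ∧ H.Edge u v := by
        intro a b hab ⟨u, hu⟩
        have hid : (GTerm.app (GTerm.var a) (GTerm.var b), GTerm.var a) ∈ imp.prem :=
          Or.inl ⟨a, b, hab, rfl⟩
        have := hprem _ hid
        unfold DGraph.SatIdWith at this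
        simp only [DGraph.eval, hu] at this
        cases hb : h b with
        | none => rw [hb] at this; simp at this
        | some v =>
          rw [hb] at this
          by_cases hEuv : H.Edge u v
          · exact ⟨v, u, rfl, hu, hEuv⟩
          · simp [hEuv] at this
      have hprop : ∀ c, Relation.ReflTransGen (fun a b => (termGraph t).Edge a b) x0 c →
          ∃ u, h c = some u := by
        intro c hr
        induction hr with
        | refl => exact ⟨u0, hu0⟩
        | tail _ hbc ih =>
          obtain ⟨v, u, hv, _, _⟩ := hstep _ _ hbc ih
          exact ⟨v, hv⟩
      have hall : ∀ a ∈ t.vars, ∃ u, h a = some u := by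
        intro a ha
        exact hprop a (GTerm.reach' (fun a b => (termGraph t).Edge a b) t ht
          (fun a b hab => ⟨hab, (GTerm.edges_mem' t hab).1, (GTerm.edges_mem' t hab).2⟩)
          x0 hx0 a ha)
      -- build a strong homomorphism
      set f : ℕ → H.U := fun a => (h a).getD u0 with hf
      have hfa : ∀ a ∈ t.vars, h a = some (f a) := by
        intro a ha
        obtain ⟨u, hu⟩ := hall a ha
        simp [hf, hu]
      refine hH ⟨f, ⟨⟨?_, ?_⟩, ?_⟩⟩
      · intro a ha
        exact hassign a (f a) (hfa a ha)
      · intro a b hab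
        obtain ⟨v, u, hv, hu, hE⟩ := hstep a b hab ⟨f a, hfa a hab.2.1⟩
        have h1 : f a = u := by rw [hfa a hab.2.1] at hu; exact (Option.some_inj.mp hu)
        have h2 : f b = v := by rw [hfa b hab.2.2] at hv; exact (Option.some_inj.mp hv.symm).symm
        rw [h1, h2]; exact hE
      · intro a ha b hb hnab hEf
        have hid : (GTerm.app (GTerm.var a) (GTerm.var b), GTerm.inf) ∈ imp.prem :=
          Or.inr ⟨a, b, ha, hb, hnab, rfl⟩
        have := hprem _ hid
        unfold DGraph.SatIdWith at this
        simp only [DGraph.eval, hfa a ha, hfa b hb, if_pos hEf] at this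
        cases this
    · -- ModI {imp} ⊆ K
      intro hH ⟨f, hfhom, hfstrong⟩
      have hsat := hH imp rfl
      set h : ℕ → Option H.U := fun a => if a ∈ t.vars then some (f a) else none with hh
      have hassign : H.Assign h := by
        intro a u hu
        simp only [hh] at hu
        split at hu
        · cases hu; exact hfhom.1 a ‹a ∈ t.vars›
        · exact absurd hu (by simp)
      have hx0v : x0 ∈ t.vars := GTerm.leftVar_mem_vars' t hx0
      have hconcl := hsat h hassign ?_
      · have : h x0 = none := hconcl
        simp [hh, hx0v] at this
      · rintro e (⟨a, b, hab, rfl⟩ | ⟨a, b, ha, hb, hnab, rfl⟩)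
        · have hE := hfhom.2 a b hab
          show DGraph.eval H h _ = DGraph.eval H h _
          simp [DGraph.eval, hh, hab.2.1, hab.2.2, hE]
        · have hnE := hfstrong a ha b hb (fun hE => hnab hE)
          have ha' : a ∈ t.vars := ha
          have hb' : b ∈ t.vars := hb
          show DGraph.eval H h _ = DGraph.eval H h _
          simp [DGraph.eval, hh, ha', hb', hnE]
          split_ifs <;> simp_all
  constructor
  · ext H
    constructor
    · intro hH imp' himp'
      exact himp' H hH
    · intro hH
      have himpK : imp ∈ qId K := by
        intro G hG
        rw [key] at hG
        exact hG imp rfl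
      rw [key]
      intro imp' himp'
      rcases himp' with rfl
      exact hH imp himpK
  · exact key
end
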